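/- (Strict cost decrease away from equilibrium) Suppose the flow vector f : K → ℝ satisfies f k ≥ 0 for all k and f is not a Wardrop user equilibrium with respect to C. Then the aggregate travel cost strictly decreases under one discrete NPSD step: Σ_{k ∈ K} C k · (f′ k − f k) < 0. -/

import Mathlib

open Finset

-- The candidate set `R k` of routes in the same OD pair as `k` with strictly lower cost.
open Classical in
noncomputable def Rset {W K : Type*} [Fintype K] (od : K → W) (C : K → ℝ) (k : K) :
    Finset K :=
  Finset.univ.filter (fun p => od p = od k ∧ C p < C k)

-- The NPSD revision protocol.
open Classical in
noncomputable def rho {W K : Type*} [Fintype K] (od : K → W) (C : K → ℝ) (θ : W → ℝ)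
    (k p : K) : ℝ :=
  if od p = od k ∧ (Rset od C k).Nonempty then
    max 0 ((1 - Real.exp (-θ (od k) * (C k - C p))) / (Rset od C k).card)
  else 0

/-- One discrete NPSD step for a given cost vector `C`. -/
noncomputable def npsdStep {W K : Type*} [Fintype K] (od : K → W) (C : K → ℝ) (θ : W → ℝ)
    (f : K → ℝ) (k : K) : ℝ :=
  f k + (∑ p, f p * rho od C θ p k) - f k * ∑ p, rho od C θ k p

theorem npsd_strict_decrease_away_from_equilibrium {W K : Type*} [Fintype W] [Fintype K]
    [Nonempty W] [Nonempty K] (od : K → W) (C : K → ℝ) (θ : W → ℝ)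
    (hθ : ∀ w, 0 < θ w) (f : K → ℝ) (hf : ∀ k, 0 ≤ f k)
    (hne : ¬ (∀ k p : K, od p = od k → 0 < f k → C k ≤ C p)) :
    ∑ k, C k * (npsdStep od C θ f k - f k) < 0 := by
  classical
  push_neg at hne
  obtain ⟨k₀, p₀, hod, hfk, hC⟩ := hne
  -- basic facts about rho
  have hrho_nonneg : ∀ k p, 0 ≤ rho od C θ k p := by
    intro k p; unfold rho; split
    · exact le_max_left _ _
    · exact le_refl 0
  have hrho_pos_imp : ∀ k p, 0 < rho od C θ k p → C p < C k := by
    intro k p h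
    by_contra hle
    push_neg at hle
    unfold rho at h
    split at h
    · rcases lt_max_iff.mp h with h' | h'
      · exact lt_irrefl _ h'
      · have hcard : (0:ℝ) ≤ ((Rset od C k).card : ℝ) := by positivity
        have hnum : 1 - Real.exp (-θ (od k) * (C k - C p)) ≤ 0 := by
          have hx : (0:ℝ) ≤ -θ (od k) * (C k - C p) := by
            nlinarith [(hθ (od k)).le]
          nlinarith [Real.one_le_exp hx]
        have := div_nonpos_of_nonpos_of_nonneg hnum hcard
        linarith
    · exact lt_irrefl _ h
  have hterm_nonpos : ∀ p k, f p * rho od C θ p k * (C k - C p) ≤ 0 := by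
    intro p k
    rcases eq_or_lt_of_le (hrho_nonneg p k) with h | h
    · rw [← h]; ring_nf; simp
    · have hclt := hrho_pos_imp p k h
      have h1 : 0 ≤ f p * rho od C θ p k := mul_nonneg (hf p) (hrho_nonneg p k)
      nlinarith
  -- the witness term is strictly negative
  have hmem : p₀ ∈ Rset od C k₀ := by
    simp [Rset, hod, hC]
  have hrpos : 0 < rho od C θ k₀ p₀ := by
    unfold rho
    rw [if_pos ⟨hod, ⟨p₀, hmem⟩⟩]
    have hcard : (0:ℝ) < ((Rset od C k₀).card : ℝ) := by
      exact_mod_cast Finset.card_pos.mpr ⟨p₀, hmem⟩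
    have hx : -θ (od k₀) * (C k₀ - C p₀) < 0 := by
      nlinarith [hθ (od k₀)]
    have : Real.exp (-θ (od k₀) * (C k₀ - C p₀)) < 1 := Real.exp_lt_one_iff.mpr hx
    have hnum : 0 < 1 - Real.exp (-θ (od k₀) * (C k₀ - C p₀)) := by linarith
    have := div_pos hnum hcard
    exact lt_max_of_lt_right this
  have hwit : f k₀ * rho od C θ k₀ p₀ * (C p₀ - C k₀) < 0 := by
    have h1 : 0 < f k₀ * rho od C θ k₀ p₀ := mul_pos hfk hrpos
    nlinarith
  -- rewrite the sum
  have key : ∑ k, C k * (npsdStep od C θ f k - f k)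
      = ∑ p, ∑ k, f p * rho od C θ p k * (C k - C p) := by
    have h1 : ∀ k, C k * (npsdStep od C θ f k - f k)
        = (∑ p, C k * (f p * rho od C θ p k)) - ∑ p, (C k * f k) * rho od C θ k p := by
      intro k; unfold npsdStep; rw [← Finset.mul_sum, ← Finset.mul_sum]; ring
    calc ∑ k, C k * (npsdStep od C θ f k - f k)
        = ∑ k, ((∑ p, C k * (f p * rho od C θ p k)) - ∑ p, (C k * f k) * rho od C θ k p) :=
          Finset.sum_congr rfl (fun k _ => h1 k)
      _ = (∑ k, ∑ p, C k * (f p * rho od C θ p k)) - ∑ k, ∑ p, (C k * f k) * rho od C θ k p :=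
          Finset.sum_sub_distrib _ _
      _ = (∑ p, ∑ k, C k * (f p * rho od C θ p k)) - ∑ p, ∑ k, (C p * f p) * rho od C θ p k := by
          rw [Finset.sum_comm]
      _ = ∑ p, ((∑ k, C k * (f p * rho od C θ p k)) - ∑ k, (C p * f p) * rho od C θ p k) :=
          (Finset.sum_sub_distrib _ _).symm
      _ = ∑ p, ∑ k, (C k * (f p * rho od C θ p k) - (C p * f p) * rho od C θ p k) := by
          exact Finset.sum_congr rfl (fun p _ => (Finset.sum_sub_distrib _ _).symm)
      _ = ∑ p, ∑ k, f p * rho od C θ p k * (C k - C p) := by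
          exact Finset.sum_congr rfl (fun p _ => Finset.sum_congr rfl (fun k _ => by ring))
  rw [key]
  have hinner_nonpos : ∀ p, ∑ k, f p * rho od C θ p k * (C k - C p) ≤ 0 :=
    fun p => Finset.sum_nonpos (fun k _ => hterm_nonpos p k)
  have hinner_wit : ∑ k, f k₀ * rho od C θ k₀ k * (C k - C k₀) < 0 := by
    have : ∑ k, f k₀ * rho od C θ k₀ k * (C k - C k₀) < ∑ _k : K, (0:ℝ) :=
      Finset.sum_lt_sum (fun k _ => hterm_nonpos k₀ k)
        ⟨p₀, Finset.mem_univ p₀, hwit⟩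
    simpa using this
  have : ∑ p, ∑ k, f p * rho od C θ p k * (C k - C p) < ∑ _p : K, (0:ℝ) :=
    Finset.sum_lt_sum (fun p _ => hinner_nonpos p) ⟨k₀, Finset.mem_univ k₀, hinner_wit⟩
  simpa using this
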